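/- Let η be the Minkowski bilinear form on ℝ^{n+1}, η(x, y) = −x₀y₀ + Σ_{i=1}^{n} xᵢyᵢ, and let γ ∈ ℝ^{n+1} be a fixed vector. Define V(y) = γ + η(γ, y)·y. Then for every x ∈ ℝ^{n+1} with η(x, x) = −1 and all u, v ∈ ℝ^{n+1} with η(u, x) = η(v, x) = 0: η(DV(x)u, v) + η(DV(x)v, u) = 2·η(γ, x)·η(u, v), where D denotes the Fréchet derivative. (This is the computation 𝓛_V g = 2 h_γ g of Example 5.2 of the paper on the hyperboloid model of ℍ^n in Lorentz space, showing the tangential part of the constant field γ endows ℍ^n with a gradient Ricci almost soliton structure with soliton function λ_γ = −(n−1) + h_γ.) -/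

import Mathlib

/-- Example 5.2 of the paper on the hyperboloid model of `ℍ^n`: the tangential part
`V(y) = γ + η(γ,y)y` of the constant field `γ` satisfies `𝓛_V g = 2h_γ g` on
tangent vectors. -/
theorem lie_derivative_height_gradient_hyperbolic (n : ℕ)
    (η : (Fin (n + 1) → ℝ) → (Fin (n + 1) → ℝ) → ℝ)
    (hη : ∀ x y, η x y = -(x 0 * y 0) + ∑ i : Fin n, x i.succ * y i.succ)
    (γ : Fin (n + 1) → ℝ)
    (V : (Fin (n + 1) → ℝ) → (Fin (n + 1) → ℝ))
    (hV : ∀ y, V y = γ + η γ y • y) :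
    ∀ x u v : Fin (n + 1) → ℝ, η x x = -1 → η u x = 0 → η v x = 0 →
      η (fderiv ℝ V x u) v + η (fderiv ℝ V x v) u = 2 * η γ x * η u v := by
  intro x u v hx hu hv
  -- the continuous linear map `y ↦ η γ y`
  let L : (Fin (n + 1) → ℝ) →L[ℝ] ℝ :=
    (-(γ 0)) • ContinuousLinearMap.proj 0 +
      ∑ i : Fin n, (γ i.succ) • ContinuousLinearMap.proj i.succ
  have hL : ∀ y : Fin (n + 1) → ℝ, L y = η γ y := by
    intro y
    rw [hη]
    simp [L, neg_mul]
  have hsymm : ∀ a b : Fin (n + 1) → ℝ, η a b = η b a := by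
    intro a b
    rw [hη, hη]
    simp [mul_comm]
  have hlin : ∀ (a b : ℝ) (p q z : Fin (n + 1) → ℝ),
      η (a • p + b • q) z = a * η p z + b * η q z := by
    intro a b p q z
    rw [hη, hη, hη]
    simp only [Pi.add_apply, Pi.smul_apply, smul_eq_mul, add_mul,
      Finset.sum_add_distrib, mul_assoc, ← Finset.mul_sum]
    ring
  -- compute the derivative
  have hD : HasFDerivAt V
      ((η γ x) • ContinuousLinearMap.id ℝ (Fin (n + 1) → ℝ) + L.smulRight x) x := by
    have h1 : HasFDerivAt (fun y : Fin (n + 1) → ℝ => γ + L y • y)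
        ((L x) • ContinuousLinearMap.id ℝ (Fin (n + 1) → ℝ) + L.smulRight x) x := by
      have : HasFDerivAt (fun y : Fin (n + 1) → ℝ => γ + L y • y)
          (0 + ((L x) • ContinuousLinearMap.id ℝ (Fin (n + 1) → ℝ) + L.smulRight x)) x :=
        (hasFDerivAt_const γ x).add ((L.hasFDerivAt).smul (hasFDerivAt_id x))
      convert this using 1
      ext w
      simp [ContinuousLinearMap.smulRight_apply]
    have hfun : V = fun y : Fin (n + 1) → ℝ => γ + L y • y := by
      funext y; rw [hV y, hL y]
    rw [hfun]
    rw [hL x] at h1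
    exact h1
  have hfd : ∀ w : Fin (n + 1) → ℝ, fderiv ℝ V x w = η γ x • w + (η γ w) • x := by
    intro w
    rw [hD.fderiv]
    simp [ContinuousLinearMap.smulRight_apply, hL]
  rw [hfd u, hfd v, hlin, hlin, hsymm x v, hsymm x u, hu, hv, hsymm v u]
  ring
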